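/- Let F = F_n/√n be the normalized Fourier matrix. For a circulant matrix H ∈ M_n(ℂ) with first row x ∈ ℂⁿ, let Φ(H) denote the circulant matrix with first row Fx. Then: (i) H is a (circulant) complex Hadamard matrix if and only if Φ(H) is a (circulant) complex Hadamard matrix; (ii) H is a circulant real Hadamard matrix (all entries ±1, rows pairwise orthogonal) if and only if Φ(H) is a Hermitian circulant complex Hadamard matrix. -/

import Mathlib

open Complex Matrix

/-- The `n×n` Fourier matrix `(w^{ij})` with `w = e^{2πi/n}`. -/
noncomputable def Fourier (n : ℕ) : Matrix (ZMod n) (ZMod n) ℂ :=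
  fun i j => Complex.exp (2 * Real.pi * Complex.I * (i.val * j.val) / n)

/-- The normalized Fourier matrix `F = F_n / √n`. -/
noncomputable def NFourier (n : ℕ) : Matrix (ZMod n) (ZMod n) ℂ :=
  (1 / (Real.sqrt n : ℂ)) • Fourier n

/-- A complex Hadamard matrix: unimodular entries and pairwise orthogonal rows. -/
def IsHadamard {n : ℕ} [NeZero n] (H : Matrix (ZMod n) (ZMod n) ℂ) : Prop :=
  (∀ i j, ‖H i j‖ = 1) ∧ H * Hᴴ = (n : ℂ) • 1

namespace CircDual

open Finset

set_option linter.unusedSectionVars false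

variable (n : ℕ) [NeZero n]

/-- The character `a ↦ e^{2πia/n}` on `ZMod n`. -/
noncomputable def ee (a : ZMod n) : ℂ := Complex.exp (2 * Real.pi * Complex.I * a.val / n)

lemma ee_int (m : ℤ) : ee n (m : ZMod n) = Complex.exp (2 * Real.pi * Complex.I * (m : ℂ) / n) := by
  have hn : (n : ℂ) ≠ 0 := Nat.cast_ne_zero.2 (NeZero.ne n)
  have h1 : (((m : ZMod n).val : ℤ) : ZMod n) = (m : ZMod n) := by
    push_cast
    simp [ZMod.natCast_val, ZMod.intCast_cast]
  have h2 : ((m : ZMod n).val : ℤ) ≡ m [ZMOD n] := (ZMod.intCast_eq_intCast_iff _ _ _).1 h1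
  obtain ⟨k, hk⟩ : ∃ k : ℤ, m = ((m : ZMod n).val : ℤ) + n * k := by
    obtain ⟨k, hk⟩ := Int.modEq_iff_dvd.1 h2
    exact ⟨k, by linarith⟩
  have hc : (m : ℂ) = ((m : ZMod n).val : ℂ) + n * k := by
    exact_mod_cast congrArg (Int.cast : ℤ → ℂ) hk
  rw [ee, hc]
  have : 2 * (Real.pi:ℂ) * I * (((m : ZMod n).val : ℂ) + n * k) / n
      = 2 * (Real.pi:ℂ) * I * ((m : ZMod n).val) / n + k * (2 * (Real.pi:ℂ) * I) := by
    field_simp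
  rw [this, Complex.exp_add, Complex.exp_int_mul_two_pi_mul_I, mul_one]

lemma ee_zero : ee n 0 = 1 := by simp [ee]

lemma ee_add (a b : ZMod n) : ee n (a + b) = ee n a * ee n b := by
  have hva : ((a.val : ℕ) : ZMod n) = a := ZMod.natCast_rightInverse a
  have hvb : ((b.val : ℕ) : ZMod n) = b := ZMod.natCast_rightInverse b
  have h1 : ee n (a + b) = ee n (((a.val + b.val : ℤ) : ZMod n)) := by
    congr 1; push_cast; rw [hva, hvb]
  have h2 : ee n a = Complex.exp (2 * Real.pi * Complex.I * ((a.val:ℤ):ℂ) / n) := by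
    rw [← ee_int]; congr 1; push_cast; rw [hva]
  have h3 : ee n b = Complex.exp (2 * Real.pi * Complex.I * ((b.val:ℤ):ℂ) / n) := by
    rw [← ee_int]; congr 1; push_cast; rw [hvb]
  rw [h1, ee_int, h2, h3, ← Complex.exp_add]
  congr 1
  have hn : (n : ℂ) ≠ 0 := Nat.cast_ne_zero.2 (NeZero.ne n)
  field_simp
  push_cast
  ring

lemma ee_conj (a : ZMod n) : (starRingEnd ℂ) (ee n a) = ee n (-a) := by
  have hva : ((a.val : ℕ) : ZMod n) = a := ZMod.natCast_rightInverse a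
  have h1 : ee n (-a) = Complex.exp (2 * Real.pi * Complex.I * ((-(a.val:ℤ) : ℤ) : ℂ) / n) := by
    rw [← ee_int]; congr 1; push_cast; rw [hva]
  rw [h1, ee, ← Complex.exp_conj]
  congr 1
  simp only [_root_.map_mul, map_div₀, map_ofNat, Complex.conj_I, Complex.conj_natCast,
    Complex.conj_ofReal]
  push_cast
  ring

lemma ee_pow (d k : ZMod n) : ee n (d * k) = (ee n d) ^ k.val := by
  have hvk : ((k.val : ℕ) : ZMod n) = k := ZMod.natCast_rightInverse k
  have h : d * k = (k.val : ℕ) • d := by rw [nsmul_eq_mul]; rw [hvk]; ring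
  rw [h]
  induction k.val with
  | zero => simpa using ee_zero n
  | succ m ih => rw [succ_nsmul, ee_add, ih, pow_succ]

lemma ee_ne_one (d : ZMod n) (hd : d ≠ 0) : ee n d ≠ 1 := by
  have hn : (n : ℂ) ≠ 0 := Nat.cast_ne_zero.2 (NeZero.ne n)
  have hne : (2 * (Real.pi:ℂ) * I) ≠ 0 := by
    simp [Real.pi_ne_zero, Complex.I_ne_zero, Complex.ofReal_ne_zero]
  intro h
  unfold ee at h
  rw [Complex.exp_eq_one_iff] at h
  obtain ⟨k, hk⟩ := h
  have h3 : 2 * (Real.pi:ℂ) * I * (d.val:ℂ) = 2 * (Real.pi:ℂ) * I * (k * n) := by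
    rw [div_eq_iff hn] at hk
    linear_combination hk
  have h4 : (d.val : ℂ) = ((k * n : ℤ) : ℂ) := by
    have := mul_left_cancel₀ hne h3
    push_cast
    exact this
  have h5 : (d.val : ℤ) = k * n := by exact_mod_cast h4
  have hdvd : (n : ℤ) ∣ (d.val : ℤ) := ⟨k, by linarith⟩
  have hdvd' : n ∣ d.val := Int.ofNat_dvd.1 hdvd
  have := Nat.eq_zero_of_dvd_of_lt hdvd' (ZMod.val_lt d)
  exact hd (by rwa [← ZMod.val_eq_zero])

lemma ee_pow_n (d : ZMod n) : (ee n d) ^ n = 1 := by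
  have hn : (n : ℂ) ≠ 0 := Nat.cast_ne_zero.2 (NeZero.ne n)
  rw [ee, ← Complex.exp_nat_mul]
  have : (n:ℂ) * (2 * Real.pi * I * (d.val:ℂ) / n) = ((d.val : ℤ) : ℂ) * (2 * Real.pi * I) := by
    push_cast
    field_simp
  rw [this]
  exact Complex.exp_int_mul_two_pi_mul_I (d.val : ℤ)

lemma sum_ee (d : ZMod n) : ∑ k : ZMod n, ee n (d * k) = if d = 0 then (n:ℂ) else 0 := by
  by_cases hd : d = 0
  · simp [hd, ee_zero, ZMod.card]
  · rw [if_neg hd]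
    have h1 : ∑ k : ZMod n, ee n (d * k) = ∑ m ∈ Finset.range n, (ee n d)^m := by
      refine Finset.sum_nbij' (fun k => k.val) (fun m => (m : ZMod n)) ?_ ?_ ?_ ?_ ?_
      · intro a _; exact Finset.mem_range.2 (ZMod.val_lt a)
      · intro a _; exact Finset.mem_univ _
      · intro a _; exact ZMod.natCast_rightInverse a
      · intro a ha; exact ZMod.val_cast_of_lt (Finset.mem_range.1 ha)
      · intro a _; exact ee_pow n d a
    rw [h1, geom_sum_eq (ee_ne_one n d hd), ee_pow_n]
    simp

lemma abs_one_iff (z : ℂ) : ‖z‖ = 1 ↔ z * (starRingEnd ℂ) z = 1 := by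
  rw [Complex.mul_conj]
  constructor
  · intro h
    rw [Complex.normSq_eq_norm_sq, h]
    norm_num
  · intro h
    have h2 : Complex.normSq z = 1 := by exact_mod_cast h
    rw [Complex.norm_def, h2, Real.sqrt_one]

lemma pm_iff (z : ℂ) : (z = 1 ∨ z = -1) ↔ (z * (starRingEnd ℂ) z = 1 ∧ (starRingEnd ℂ) z = z) := by
  constructor
  · rintro (rfl | rfl) <;> simp
  · rintro ⟨h1, h2⟩
    rw [h2] at h1
    exact mul_self_eq_one_iff.1 h1

lemma dft_inj (u : ZMod n → ℂ)
    (h : ∀ d : ZMod n, ∑ m : ZMod n, ee n (d * m) * u m = 0) (p : ZMod n) : u p = 0 := by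
  have hn : (n:ℂ) ≠ 0 := Nat.cast_ne_zero.2 (NeZero.ne n)
  have key : ∑ d : ZMod n, ee n (d * (-p)) * ∑ m : ZMod n, ee n (d * m) * u m
      = (n:ℂ) * u p := by
    calc ∑ d : ZMod n, ee n (d * (-p)) * ∑ m : ZMod n, ee n (d * m) * u m
        = ∑ d : ZMod n, ∑ m : ZMod n, ee n ((m - p) * d) * u m := by
          refine Finset.sum_congr rfl fun d _ => ?_
          rw [Finset.mul_sum]
          refine Finset.sum_congr rfl fun m _ => ?_
          rw [← mul_assoc, ← ee_add]
          congr 2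
          ring
      _ = ∑ m : ZMod n, ∑ d : ZMod n, ee n ((m - p) * d) * u m := Finset.sum_comm
      _ = ∑ m : ZMod n, (if m - p = 0 then (n:ℂ) else 0) * u m := by
          refine Finset.sum_congr rfl fun m _ => ?_
          rw [← Finset.sum_mul, sum_ee]
      _ = (n:ℂ) * u p := by
          rw [Finset.sum_eq_single p]
          · simp
          · intro b _ hb
            rw [if_neg (sub_ne_zero.2 hb), zero_mul]
          · intro hp
            exact absurd (Finset.mem_univ p) hp
  have h0 : ∑ d : ZMod n, ee n (d * (-p)) * ∑ m : ZMod n, ee n (d * m) * u m = 0 := by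
    refine Finset.sum_eq_zero fun d _ => ?_
    rw [h d, mul_zero]
  rw [h0] at key
  exact (mul_eq_zero.1 key.symm).resolve_left hn

lemma transform (x : ZMod n → ℂ) (k : ZMod n) :
    (∑ j : ZMod n, ee n (k * j) * x j) * (starRingEnd ℂ) (∑ j : ZMod n, ee n (k * j) * x j)
      = ∑ d : ZMod n, ee n (k * d) * ∑ m : ZMod n, x (m + d) * (starRingEnd ℂ) (x m) := by
  rw [map_sum, Finset.sum_mul_sum]
  rw [Finset.sum_comm]
  calc ∑ m : ZMod n, ∑ j : ZMod n,
        (ee n (k * j) * x j) * (starRingEnd ℂ) (ee n (k * m) * x m)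
      = ∑ m : ZMod n, ∑ d : ZMod n, ee n (k * d) * (x (m + d) * (starRingEnd ℂ) (x m)) := by
        refine Finset.sum_congr rfl fun m _ => ?_
        refine Fintype.sum_equiv (Equiv.subRight m) _ _ fun j => ?_
        simp only [Equiv.subRight_apply]
        rw [_root_.map_mul, ee_conj]
        have h1 : ee n (k * j) * ee n (-(k * m)) = ee n (k * (j - m)) := by
          rw [← ee_add]; congr 1; ring
        have h2 : m + (j - m) = j := by ring
        rw [h2, ← h1]
        ring
    _ = ∑ d : ZMod n, ee n (k * d) * ∑ m : ZMod n, x (m + d) * (starRingEnd ℂ) (x m) := by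
        rw [Finset.sum_comm]
        refine Finset.sum_congr rfl fun d _ => ?_
        rw [Finset.mul_sum]

lemma orth_iff (x : ZMod n → ℂ) (H : Matrix (ZMod n) (ZMod n) ℂ)
    (hH : ∀ i j, H i j = x (j - i)) :
    H * Hᴴ = (n : ℂ) • 1 ↔
      ∀ k : ZMod n, (∑ j : ZMod n, ee n (k * j) * x j) *
        (starRingEnd ℂ) (∑ j : ZMod n, ee n (k * j) * x j) = n := by
  have hn : (n:ℂ) ≠ 0 := Nat.cast_ne_zero.2 (NeZero.ne n)
  have hA : ∀ i l, (H * Hᴴ) i l = ∑ m : ZMod n, x (m + (l - i)) * (starRingEnd ℂ) (x m) := by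
    intro i l
    rw [Matrix.mul_apply]
    simp only [Matrix.conjTranspose_apply, hH]
    refine (Fintype.sum_equiv (Equiv.addRight l) _ _ fun m => ?_).symm
    simp only [Equiv.coe_addRight]
    rw [show m + l - l = m by ring, show m + (l - i) = m + l - i by ring]
    rfl
  have hC : H * Hᴴ = (n : ℂ) • 1 ↔
      ∀ d : ZMod n, (∑ m : ZMod n, x (m + d) * (starRingEnd ℂ) (x m))
        = if d = 0 then (n:ℂ) else 0 := by
    constructor
    · intro h d
      have := congrFun (congrFun h 0) d
      rw [hA] at this
      rw [show d - 0 = d by ring] at this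
      rw [this]
      by_cases hd : d = 0 <;> simp [hd, Matrix.smul_apply, Matrix.one_apply, Ne.symm]
    · intro h
      ext i l
      rw [hA, h (l - i), Matrix.smul_apply, Matrix.one_apply]
      by_cases hil : i = l
      · simp [hil]
      · rw [if_neg (sub_ne_zero.2 (Ne.symm hil)), if_neg hil, smul_zero]
  rw [hC]
  constructor
  · intro h k
    rw [transform]
    calc ∑ d : ZMod n, ee n (k * d) * ∑ m : ZMod n, x (m + d) * (starRingEnd ℂ) (x m)
        = ∑ d : ZMod n, ee n (k * d) * (if d = 0 then (n:ℂ) else 0) := by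
          refine Finset.sum_congr rfl fun d _ => by rw [h d]
      _ = (n:ℂ) := by
          rw [Finset.sum_eq_single 0]
          · simp [ee_zero]
          · intro b _ hb; simp [hb]
          · intro hp; exact absurd (Finset.mem_univ 0) hp
  · intro h d
    have hz : ∀ k : ZMod n, ∑ m : ZMod n, ee n (k * m) *
        ((∑ j : ZMod n, x (j + m) * (starRingEnd ℂ) (x j)) - (if m = 0 then (n:ℂ) else 0)) = 0 := by
      intro k
      have e1 : ∑ m : ZMod n, ee n (k * m) *
          ((∑ j : ZMod n, x (j + m) * (starRingEnd ℂ) (x j)) - (if m = 0 then (n:ℂ) else 0))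
          = (∑ m : ZMod n, ee n (k * m) * ∑ j : ZMod n, x (j + m) * (starRingEnd ℂ) (x j))
            - ∑ m : ZMod n, ee n (k * m) * (if m = 0 then (n:ℂ) else 0) := by
        rw [← Finset.sum_sub_distrib]
        refine Finset.sum_congr rfl fun m _ => by ring
      rw [e1, ← transform, h k]
      rw [Finset.sum_eq_single (0 : ZMod n)]
      · simp [ee_zero]
      · intro b _ hb; simp [hb]
      · intro hp; exact absurd (Finset.mem_univ 0) hp
    have := dft_inj n _ hz d
    have h2 := sub_eq_zero.1 this
    exact h2

lemma sqrt_ne (hh : True) : ((Real.sqrt n : ℝ) : ℂ) ≠ 0 := by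
  have : (0:ℝ) < n := by exact_mod_cast Nat.pos_of_ne_zero (NeZero.ne n)
  exact Complex.ofReal_ne_zero.2 (ne_of_gt (Real.sqrt_pos.2 this))

lemma sqrt_mul_self (hh : True) : ((Real.sqrt n : ℝ) : ℂ) * ((Real.sqrt n : ℝ) : ℂ) = (n:ℂ) := by
  rw [← Complex.ofReal_mul, Real.mul_self_sqrt (Nat.cast_nonneg n)]
  norm_cast

lemma fourier_apply (i j : ZMod n) : Fourier n i j = ee n (i * j) := by
  have hvi : ((i.val : ℕ) : ZMod n) = i := ZMod.natCast_rightInverse i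
  have hvj : ((j.val : ℕ) : ZMod n) = j := ZMod.natCast_rightInverse j
  have h1 : ee n (i * j) = ee n (((i.val * j.val : ℤ)) : ZMod n) := by
    congr 1; push_cast; rw [hvi, hvj]
  rw [h1, ee_int]
  show Complex.exp _ = _
  congr 1
  push_cast
  ring

lemma nfourier_mulVec (x : ZMod n → ℂ) (d : ZMod n) :
    (NFourier n).mulVec x d
      = (1 / (Real.sqrt n : ℂ)) * ∑ m : ZMod n, ee n (d * m) * x m := by
  rw [Matrix.mulVec, dotProduct, Finset.mul_sum]
  refine Finset.sum_congr rfl fun m _ => ?_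
  rw [NFourier, Matrix.smul_apply, fourier_apply, smul_eq_mul]
  ring

lemma mu_eq (x : ZMod n → ℂ) (k : ZMod n) :
    ∑ j : ZMod n, ee n (k * j) * (NFourier n).mulVec x j
      = ((Real.sqrt n : ℝ) : ℂ) * x (-k) := by
  have hs := sqrt_ne n trivial
  have hss := sqrt_mul_self n trivial
  calc ∑ j : ZMod n, ee n (k * j) * (NFourier n).mulVec x j
      = ∑ j : ZMod n, ∑ m : ZMod n, (1/((Real.sqrt n : ℝ):ℂ)) * (ee n ((k+m)*j) * x m) := by
        refine Finset.sum_congr rfl fun j _ => ?_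
        rw [nfourier_mulVec, Finset.mul_sum, Finset.mul_sum]
        refine Finset.sum_congr rfl fun m _ => ?_
        rw [show ee n ((k+m)*j) = ee n (k*j) * ee n (j*m) from by rw [← ee_add]; congr 1; ring]
        ring
    _ = ∑ m : ZMod n, ∑ j : ZMod n, (1/((Real.sqrt n : ℝ):ℂ)) * (ee n ((k+m)*j) * x m) :=
        Finset.sum_comm
    _ = ∑ m : ZMod n, (if k + m = 0 then (n:ℂ) else 0) * ((1/((Real.sqrt n : ℝ):ℂ)) * x m) := by
        refine Finset.sum_congr rfl fun m _ => ?_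
        calc ∑ j : ZMod n, (1/((Real.sqrt n : ℝ):ℂ)) * (ee n ((k+m)*j) * x m)
            = (∑ j : ZMod n, ee n ((k+m)*j)) * ((1/((Real.sqrt n : ℝ):ℂ)) * x m) := by
              rw [Finset.sum_mul]
              exact Finset.sum_congr rfl fun j _ => by ring
          _ = (if k+m = 0 then (n:ℂ) else 0) * ((1/((Real.sqrt n : ℝ):ℂ)) * x m) := by
              rw [sum_ee]
    _ = ((Real.sqrt n : ℝ) : ℂ) * x (-k) := by
        rw [Finset.sum_eq_single (-k)]
        · rw [if_pos (by ring), ← hss]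
          field_simp
        · intro b _ hb
          rw [if_neg fun h => hb (eq_neg_of_add_eq_zero_right h)]
          ring
        · exact fun hp => absurd (Finset.mem_univ _) hp

end CircDual


open CircDual in
/-- The duality `Φ` on circulant matrices (given by `x ↦ Fx` on first rows) maps
complex Hadamard matrices to complex Hadamard matrices, and real Hadamard matrices
to Hermitian complex Hadamard matrices. -/
theorem circulant_duality
    (n : ℕ) [NeZero n] (x : ZMod n → ℂ)
    (H : Matrix (ZMod n) (ZMod n) ℂ) (hH : ∀ i j, H i j = x (j - i))
    (Φ : Matrix (ZMod n) (ZMod n) ℂ)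
    (hΦ : ∀ i j, Φ i j = (NFourier n).mulVec x (j - i)) :
    (_root_.IsHadamard H ↔ _root_.IsHadamard Φ) ∧
    (((∀ i j, H i j = 1 ∨ H i j = -1) ∧ H * Hᴴ = (n : ℂ) • 1) ↔
      (_root_.IsHadamard Φ ∧ Φᴴ = Φ)) := by
  classical
  have hn : (n:ℂ) ≠ 0 := Nat.cast_ne_zero.2 (NeZero.ne n)
  have hs := sqrt_ne n trivial
  have hss := sqrt_mul_self n trivial
  have P1H : (∀ i j, ‖H i j‖ = 1) ↔
      (∀ d, x d * (starRingEnd ℂ) (x d) = 1) := by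
    constructor
    · intro h d
      have h0 := h 0 d
      rw [hH, sub_zero] at h0
      exact (abs_one_iff (x d)).1 h0
    · intro h i j
      rw [hH]
      exact (abs_one_iff _).2 (h _)
  have PMH : (∀ i j, H i j = 1 ∨ H i j = -1) ↔
      ((∀ d, x d * (starRingEnd ℂ) (x d) = 1) ∧ (∀ d, (starRingEnd ℂ) (x d) = x d)) := by
    constructor
    · intro h
      constructor
      · intro d; have h0 := h 0 d; rw [hH, sub_zero] at h0; exact ((pm_iff _).1 h0).1
      · intro d; have h0 := h 0 d; rw [hH, sub_zero] at h0; exact ((pm_iff _).1 h0).2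
    · rintro ⟨h1, h2⟩ i j
      rw [hH]
      exact (pm_iff _).2 ⟨h1 _, h2 _⟩
  have QH := orth_iff n x H hH
  have hyd : ∀ d : ZMod n, (NFourier n).mulVec x d *
      (starRingEnd ℂ) ((NFourier n).mulVec x d) * (n:ℂ)
      = (∑ j : ZMod n, ee n (d * j) * x j) *
        (starRingEnd ℂ) (∑ j : ZMod n, ee n (d * j) * x j) := by
    intro d
    rw [nfourier_mulVec, _root_.map_mul, map_div₀, Complex.conj_ofReal, _root_.map_one, ← hss]
    field_simp
  have P1Φ : (∀ i j, ‖Φ i j‖ = 1) ↔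
      (∀ k : ZMod n, (∑ j : ZMod n, ee n (k * j) * x j) *
        (starRingEnd ℂ) (∑ j : ZMod n, ee n (k * j) * x j) = n) := by
    have base : (∀ i j, ‖Φ i j‖ = 1) ↔
        ∀ d, (NFourier n).mulVec x d * (starRingEnd ℂ) ((NFourier n).mulVec x d) = 1 := by
      constructor
      · intro h d
        have h0 := h 0 d
        rw [hΦ, sub_zero] at h0
        exact (abs_one_iff _).1 h0
      · intro h i j
        rw [hΦ]
        exact (abs_one_iff _).2 (h _)
    rw [base]
    constructor
    · intro h k
      rw [← hyd k, h k, one_mul]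
    · intro h d
      have h2 : (NFourier n).mulVec x d * (starRingEnd ℂ) ((NFourier n).mulVec x d) * (n:ℂ)
          = 1 * (n:ℂ) := by rw [hyd d, h d, one_mul]
      exact mul_right_cancel₀ hn h2
  have QΦ := orth_iff n ((NFourier n).mulVec x) Φ hΦ
  have QΦ' : Φ * Φᴴ = (n:ℂ) • 1 ↔ ∀ d, x d * (starRingEnd ℂ) (x d) = 1 := by
    rw [QΦ]
    constructor
    · intro h d
      have h0 := h (-d)
      rw [mu_eq, _root_.map_mul, Complex.conj_ofReal, neg_neg] at h0
      have h2 : (n:ℂ) * (x d * (starRingEnd ℂ) (x d)) = (n:ℂ) * 1 := by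
        linear_combination h0 - (x d * (starRingEnd ℂ) (x d)) * hss
      exact mul_left_cancel₀ hn h2
    · intro h k
      rw [mu_eq, _root_.map_mul, Complex.conj_ofReal]
      linear_combination (((Real.sqrt n : ℝ):ℂ) * ((Real.sqrt n : ℝ):ℂ)) * h (-k) + hss
  have HERM : Φᴴ = Φ ↔ ∀ d, (starRingEnd ℂ) (x d) = x d := by
    constructor
    · intro h d
      have hij : ∀ k : ZMod n, (starRingEnd ℂ) ((NFourier n).mulVec x k)
          = (NFourier n).mulVec x (-k) := by
        intro k
        have h0 := congrFun (congrFun h k) 0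
        rw [Matrix.conjTranspose_apply, hΦ 0 k, hΦ k 0] at h0
        rwa [sub_zero, zero_sub] at h0
      have hz : ∀ k : ZMod n,
          ∑ m : ZMod n, ee n (k * m) * ((starRingEnd ℂ) (x m) - x m) = 0 := by
        intro k
        have h0 := hij (-k)
        rw [neg_neg] at h0
        rw [nfourier_mulVec, nfourier_mulVec, _root_.map_mul, map_div₀,
          Complex.conj_ofReal, _root_.map_one, map_sum] at h0
        have h1 : ∑ j : ZMod n, (starRingEnd ℂ) (ee n ((-k) * j) * x j)
            = ∑ j : ZMod n, ee n (k * j) * (starRingEnd ℂ) (x j) := by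
          refine Finset.sum_congr rfl fun j _ => ?_
          rw [_root_.map_mul, ee_conj, show -((-k) * j) = k * j from by ring]
        rw [h1] at h0
        have h2 := mul_left_cancel₀ (one_div_ne_zero hs) h0
        calc ∑ m : ZMod n, ee n (k * m) * ((starRingEnd ℂ) (x m) - x m)
            = (∑ j : ZMod n, ee n (k * j) * (starRingEnd ℂ) (x j))
              - ∑ j : ZMod n, ee n (k * j) * x j := by
              rw [← Finset.sum_sub_distrib]
              exact Finset.sum_congr rfl fun m _ => by ring
          _ = 0 := by rw [h2, sub_self]
      have := dft_inj n _ hz d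
      exact sub_eq_zero.1 this
    · intro h
      ext i j
      rw [Matrix.conjTranspose_apply, hΦ j i, hΦ i j]
      show (starRingEnd ℂ) ((NFourier n).mulVec x (i - j)) = (NFourier n).mulVec x (j - i)
      have key : ∀ k : ZMod n, (starRingEnd ℂ) ((NFourier n).mulVec x k)
          = (NFourier n).mulVec x (-k) := by
        intro k
        rw [nfourier_mulVec, nfourier_mulVec, _root_.map_mul, map_div₀,
          Complex.conj_ofReal, _root_.map_one, map_sum]
        congr 1
        refine Finset.sum_congr rfl fun m _ => ?_
        rw [_root_.map_mul, ee_conj, h m, show -(k * m) = (-k) * m from by ring]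
      rw [key, neg_sub]
  refine ⟨?_, ?_⟩
  · simp only [_root_.IsHadamard]
    rw [P1H, QH, P1Φ, QΦ']
    exact and_comm
  · simp only [_root_.IsHadamard]
    rw [PMH, QH, P1Φ, QΦ', HERM]
    exact ⟨fun ⟨⟨a, r⟩, q⟩ => ⟨⟨q, a⟩, r⟩, fun ⟨⟨q, a⟩, r⟩ => ⟨⟨a, r⟩, q⟩⟩
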